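/- arXiv:2105.08441 — 2 statements merged into one kernel-verified Lean document; each statement's English description precedes it below -/
import Mathlib

section
/- Let p ≡ 1 (mod 4) be a prime number and ε_p the fundamental unit of ℚ(√p). Set λ = 1 if p ≡ 1 (mod 8) and λ = 3 if p ≡ 5 (mod 8). Then there exist natural numbers u and v with ε_p^λ = u + v√p, u ≡ 0 (mod 2) and v ≡ 1 (mod 4). -/
open NumberField IntermediateField

noncomputable section

/-- The subfield of `ℂ` generated over `ℚ` by the square roots of `x`, i.e. `ℚ(√x)`. -/
def QF (x : ℂ) : IntermediateField ℚ ℂ := IntermediateField.adjoin ℚ {z : ℂ | z ^ 2 = x}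

/-- The `n`-th cyclotomic field inside `ℂ`. -/
def cyclo (n : ℕ) : IntermediateField ℚ ℂ := IntermediateField.adjoin ℚ {z : ℂ | z ^ n = 1}

/-- The inclusion of rings of integers induced by an inclusion of subfields of `ℂ`. -/
def OInc {k K : IntermediateField ℚ ℂ} (h : k ≤ K) : (𝓞 k) →+* (𝓞 K) :=
  NumberField.RingOfIntegers.mapRingHom (IntermediateField.inclusion h)

/-- The extension `K/k` is unramified at all finite primes. -/
def UnramifiedAtFinitePrimes {k K : IntermediateField ℚ ℂ} (h : k ≤ K) : Prop :=
  ∀ P : Ideal (𝓞 K), P.IsPrime → P ≠ ⊥ →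
    sSup {n : ℕ | Ideal.map (OInc h) (P.comap (OInc h)) ≤ P ^ n} = 1

/-- The extension `K/k` is unramified at all infinite primes: every infinite place of `K`
has the same multiplicity as its restriction to `k`. -/
def UnramifiedAtInfinitePrimes {k K : IntermediateField ℚ ℂ} (h : k ≤ K) : Prop :=
  ∀ w : NumberField.InfinitePlace K,
    (w.comap (IntermediateField.inclusion h).toRingHom).mult = w.mult

/-- `K` is an everywhere unramified extension of `k`. -/
def UnramifiedExtension (k K : IntermediateField ℚ ℂ) : Prop :=
  ∃ h : k ≤ K, UnramifiedAtFinitePrimes h ∧ UnramifiedAtInfinitePrimes h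

/-- `F` is an abelian extension of `ℚ`. -/
def AbelianOverQ (F : IntermediateField ℚ ℂ) : Prop :=
  IsGalois ℚ F ∧ ∀ σ τ : F ≃ₐ[ℚ] F, σ * τ = τ * σ

/-- `G` is the genus field of `K`: the maximal extension of `K`, unramified at all finite and
infinite primes of `K`, of the form `K·F` with `F/ℚ` abelian. -/
def IsGenusField (K G : IntermediateField ℚ ℂ) : Prop :=
  (∃ F : IntermediateField ℚ ℂ, AbelianOverQ F ∧ G = K ⊔ F) ∧ UnramifiedExtension K G ∧
    ∀ G' : IntermediateField ℚ ℂ,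
      (∃ F : IntermediateField ℚ ℂ, AbelianOverQ F ∧ G' = K ⊔ F) →
        UnramifiedExtension K G' → G' ≤ G

/-- `E = K(√Δ)` for some subset `Δ` of `K`. -/
def Multiquadratic (K E : IntermediateField ℚ ℂ) : Prop :=
  ∃ S : Set ℂ, (∀ z ∈ S, z ^ 2 ∈ K) ∧ E = K ⊔ IntermediateField.adjoin ℚ S

/-- `E` is the Hilbert genus field of `K`: the maximal unramified Kummer extension of `K`
of exponent `2`. -/
def IsHilbertGenusField (K E : IntermediateField ℚ ℂ) : Prop :=
  Multiquadratic K E ∧ UnramifiedExtension K E ∧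
    ∀ E' : IntermediateField ℚ ℂ, Multiquadratic K E' → UnramifiedExtension K E' → E' ≤ E

/-- `ε` is a unit of the ring of integers of `ℚ(√d)`, viewed inside `ℝ`. -/
def IsQuadUnit (d : ℤ) (ε : ℝ) : Prop :=
  ∃ u v : ℤ, 2 * ε = u + v * Real.sqrt d ∧
    (u ^ 2 - d * v ^ 2 = 4 ∨ u ^ 2 - d * v ^ 2 = -4)

/-- `ε` is the fundamental unit of `ℚ(√d)`. -/
def IsFundamentalUnit (d : ℤ) (ε : ℝ) : Prop :=
  IsQuadUnit d ε ∧ 1 < ε ∧ ∀ ε' : ℝ, IsQuadUnit d ε' → 1 < ε' → ε ≤ ε'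

/-- `q* = (-1)^((q-1)/2) q` for an odd prime `q`. -/
def qstar (q : ℕ) : ℤ := (-1) ^ ((q - 1) / 2) * (q : ℤ)


private lemma sqEq {x y : ℤ} (hx : 0 ≤ x) (hy : 0 ≤ y) (h : x^2 = y^2) : x = y := by
  nlinarith [sq_nonneg (x - y), sq_nonneg (x + y)]

private lemma sqOf {m n c : ℤ} (hm : 0 < m) (hco : IsCoprime m n) (h : m * n = c^2) :
    ∃ s, 0 ≤ s ∧ m = s^2 := by
  obtain ⟨s, hs | hs⟩ := Int.sq_of_isCoprime hco h
  · exact ⟨|s|, abs_nonneg s, by rw [hs, sq_abs]⟩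
  · exfalso; nlinarith [sq_nonneg s]

private lemma copOdd (x y : ℤ) (hx : x % 2 = 1) (hd : y - x = 2 ∨ y - x = 4) :
    IsCoprime x y := by
  rw [Int.isCoprime_iff_gcd_eq_one]
  set d := Int.gcd x y with hdd
  have h1 : (d:ℤ) ∣ x := Int.gcd_dvd_left x y
  have h2 : (d:ℤ) ∣ y := Int.gcd_dvd_right x y
  have h3 : (d:ℤ) ∣ y - x := dvd_sub h2 h1
  have h4 : (d:ℤ) ∣ 4 := by
    rcases hd with h | h <;> rw [h] at h3
    · exact h3.trans (by norm_num)
    · exact h3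
  have h5 : d ∣ 4 := by exact_mod_cast h4
  have h6 : d ≤ 4 := Nat.le_of_dvd (by norm_num) h5
  interval_cases d
  · simp at h1; omega
  · rfl
  · exfalso; have : (2:ℤ) ∣ x := h1; omega
  · exfalso; norm_num at h5
  · exfalso; have : (2:ℤ) ∣ x := dvd_trans (by norm_num) h1; omega

private lemma descent (p : ℕ) (hp : p.Prime) (hp4 : p % 4 = 1) (a b : ℤ)
    (ha : 1 ≤ a) (hb : 1 ≤ b) (h : a ^ 2 - (p:ℤ) * b ^ 2 = 4) :
    ∃ s t : ℤ, 0 ≤ s ∧ 0 ≤ t ∧ s ^ 2 + (p:ℤ) * t ^ 2 = 2 * a ∧ s * t = b ∧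
      (s ^ 2 - (p:ℤ) * t ^ 2 = 4 ∨ s ^ 2 - (p:ℤ) * t ^ 2 = -4) := by
  have hp5 : 5 ≤ p := by have := hp.two_le; omega
  have hp5' : (5:ℤ) ≤ (p:ℤ) := by exact_mod_cast hp5
  have hpZ : Prime (p:ℤ) := Nat.prime_iff_prime_int.mp hp
  have hp0 : (p:ℤ) ≠ 0 := by positivity
  have hp21 : ((p:ℕ) : ZMod 2) = 1 := by
    rw [← ZMod.natCast_mod]
    have : p % 2 = 1 := by omega
    rw [this]; rfl
  have hp41 : ((p:ℕ) : ZMod 4) = 1 := by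
    rw [← ZMod.natCast_mod, hp4]; rfl
  -- a and b have the same parity
  have hpar : a % 2 = b % 2 := by
    have h2 : ((a:ZMod 2))^2 - ((p:ℕ):ZMod 2) * (b:ZMod 2)^2 = 0 := by
      have := congrArg (Int.cast : ℤ → ZMod 2) h
      push_cast at this
      rw [this]; decide
    rw [hp21, one_mul] at h2
    have : (a : ZMod 2) = (b : ZMod 2) := by
      revert h2
      have : ∀ x y : ZMod 2, x^2 - y^2 = 0 → x = y := by decide
      exact this _ _
    have hd : ((2:ℕ):ℤ) ∣ a - b := by
      rw [← ZMod.intCast_zmod_eq_zero_iff_dvd]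
      push_cast
      rw [sub_eq_zero]
      exact this
    have hd' : (2:ℤ) ∣ a - b := by exact_mod_cast hd
    omega
  rcases Int.even_or_odd a with hae | hao
  · -- both even
    obtain ⟨x, hx⟩ : (2:ℤ) ∣ a := hae.two_dvd  -- a = 2 * x ?
    obtain ⟨y, hy⟩ : (2:ℤ) ∣ b := by omega
    subst hx hy
    have hx1 : 1 ≤ x := by omega
    have hy1 : 1 ≤ y := by omega
    have h1 : x ^ 2 - (p:ℤ) * y ^ 2 = 1 := by nlinarith [h]
    have hx3 : 3 ≤ x := by nlinarith
    rcases Int.even_or_odd y with hye | hyo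
    · -- y even
      obtain ⟨z, hz⟩ : (2:ℤ) ∣ y := hye.two_dvd
      subst hz
      have hz1 : 1 ≤ z := by omega
      -- x is odd
      obtain ⟨m, hm⟩ : Odd x := by
        rcases Int.even_or_odd x with ⟨k, hk⟩ | ho
        · exfalso
          have h2 : ((k:ZMod 2) + k)^2 - ((p:ℕ):ZMod 2) * (2*(z:ZMod 2))^2 = 1 := by
            have := congrArg (Int.cast : ℤ → ZMod 2) h1
            subst hk
            push_cast at this ⊢
            linear_combination this
          rw [hp21, one_mul] at h2
          revert h2
          have : ∀ k z : ZMod 2, (k + k)^2 - (2*z)^2 ≠ 1 := by decide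
          exact this _ _
        · exact ho
      subst hm
      have hm1 : 1 ≤ m := by omega
      have hfac : m * (m + 1) = (p:ℤ) * z ^ 2 := by
        have h4 : 4 * (m * (m + 1)) = 4 * ((p:ℤ) * z ^ 2) := by linear_combination h1
        exact mul_left_cancel₀ (by norm_num) h4
      have hcop : IsCoprime m (m+1) := ⟨-1, 1, by ring⟩
      have hdvd : (p:ℤ) ∣ m * (m+1) := hfac ▸ dvd_mul_right _ _
      rcases hpZ.dvd_mul.mp hdvd with hcase | hcase
      · -- p ∣ m : m = p*c, (m+1)*c = z^2
        obtain ⟨c, hc⟩ := hcase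
        have hc1 : 1 ≤ c := by nlinarith
        have h2 : (m+1) * c = z ^ 2 := by
          apply mul_left_cancel₀ hp0
          rw [← hfac, hc]; ring
        obtain ⟨s, hs0, hs⟩ := sqOf (by linarith : (0:ℤ) < m + 1)
          (hcop.symm.of_isCoprime_of_dvd_right ⟨(p:ℤ), by rw [hc]; ring⟩) h2
        obtain ⟨t, ht0, ht⟩ := sqOf (by linarith : (0:ℤ) < c)
          ((hcop.symm.of_isCoprime_of_dvd_right ⟨(p:ℤ), by rw [hc]; ring⟩).symm.of_isCoprime_of_dvd_right dvd_rfl)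
          (by rw [mul_comm] at h2; exact h2)
        have hst : s * t = z := by
          apply sqEq (by positivity) (by linarith)
          rw [mul_pow, ← hs, ← ht, h2]
        refine ⟨2*s, 2*t, by positivity, by positivity, ?_, ?_, Or.inl ?_⟩
        · linear_combination (-4:ℤ)*hs - 4*(p:ℤ)*ht - 4*hc
        · linear_combination (4:ℤ)*hst
        · linear_combination (-4:ℤ)*hs + 4*(p:ℤ)*ht + 4*hc
      · -- p ∣ m+1 : m+1 = p*c, m*c = z^2
        obtain ⟨c, hc⟩ := hcase
        have hc1 : 1 ≤ c := by nlinarith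
        have h2 : m * c = z ^ 2 := by
          apply mul_left_cancel₀ hp0
          rw [← hfac, hc]; ring
        have hcop2 : IsCoprime m c := hcop.of_isCoprime_of_dvd_right ⟨(p:ℤ), by rw [hc]; ring⟩
        obtain ⟨s, hs0, hs⟩ := sqOf (by linarith : (0:ℤ) < m) hcop2 h2
        obtain ⟨t, ht0, ht⟩ := sqOf (by linarith : (0:ℤ) < c) hcop2.symm
          (by rw [mul_comm] at h2; exact h2)
        have hst : s * t = z := by
          apply sqEq (by positivity) (by linarith)
          rw [mul_pow, ← hs, ← ht, h2]
        refine ⟨2*s, 2*t, by positivity, by positivity, ?_, ?_, Or.inr ?_⟩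
        · linear_combination (-4:ℤ)*hs - 4*(p:ℤ)*ht - 4*hc
        · linear_combination (4:ℤ)*hst
        · linear_combination (-4:ℤ)*hs + 4*(p:ℤ)*ht + 4*hc
    · -- y odd : contradiction
      exfalso
      obtain ⟨l, hl⟩ := hyo
      -- x is even
      obtain ⟨k, hk⟩ : (2:ℤ) ∣ x := by
        rcases Int.even_or_odd x with he | ⟨k, hk⟩
        · exact he.two_dvd
        · exfalso
          have h2 : (2*(k:ZMod 2)+1)^2 - ((p:ℕ):ZMod 2) * (2*(l:ZMod 2)+1)^2 = 1 := by
            have := congrArg (Int.cast : ℤ → ZMod 2) h1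
            rw [hk, hl] at this
            push_cast at this ⊢
            linear_combination this
          rw [hp21, one_mul] at h2
          revert h2
          have : ∀ k l : ZMod 2, (2*k+1)^2 - (2*l+1)^2 ≠ 1 := by decide
          exact this _ _
      have hxo1 : (x - 1) % 2 = 1 := by omega
      have hcop : IsCoprime (x-1) (x+1) := copOdd _ _ hxo1 (Or.inl (by ring))
      have hfac : (x-1) * (x+1) = (p:ℤ) * y ^ 2 := by linear_combination h1
      have hdvd : (p:ℤ) ∣ (x-1) * (x+1) := hfac ▸ dvd_mul_right _ _
      rcases hpZ.dvd_mul.mp hdvd with hcase | hcase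
      · -- p ∣ x-1 : (x+1)*c = y^2, s^2 = x+1, p t^2 = x-1, s^2 - p t^2 = 2
        obtain ⟨c, hc⟩ := hcase
        have hc1 : 1 ≤ c := by nlinarith
        have h2 : (x+1) * c = y ^ 2 := by
          apply mul_left_cancel₀ hp0
          rw [← hfac, hc]; ring
        have hcop2 : IsCoprime (x+1) c := hcop.symm.of_isCoprime_of_dvd_right ⟨(p:ℤ), by rw [hc]; ring⟩
        obtain ⟨s, hs0, hs⟩ := sqOf (by linarith : (0:ℤ) < x+1) hcop2 h2
        obtain ⟨t, ht0, ht⟩ := sqOf (by linarith : (0:ℤ) < c) hcop2.symm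
          (by rw [mul_comm] at h2; exact h2)
        have key : s^2 - (p:ℤ)*t^2 = 2 := by linear_combination -hs + (p:ℤ)*ht + hc
        have h8 : ((s:ZMod 4))^2 - ((p:ℕ):ZMod 4) * (t:ZMod 4)^2 = 2 := by
          have := congrArg (Int.cast : ℤ → ZMod 4) key
          push_cast at this
          exact_mod_cast this
        rw [hp41, one_mul] at h8
        revert h8
        have : ∀ x y : ZMod 4, x^2 - y^2 ≠ 2 := by decide
        exact this _ _
      · -- p ∣ x+1 : s^2 = x-1, p t^2 = x+1, s^2 - p t^2 = -2
        obtain ⟨c, hc⟩ := hcase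
        have hc1 : 1 ≤ c := by nlinarith
        have h2 : (x-1) * c = y ^ 2 := by
          apply mul_left_cancel₀ hp0
          rw [← hfac, hc]; ring
        have hcop2 : IsCoprime (x-1) c := hcop.of_isCoprime_of_dvd_right ⟨(p:ℤ), by rw [hc]; ring⟩
        obtain ⟨s, hs0, hs⟩ := sqOf (by linarith : (0:ℤ) < x-1) hcop2 h2
        obtain ⟨t, ht0, ht⟩ := sqOf (by linarith : (0:ℤ) < c) hcop2.symm
          (by rw [mul_comm] at h2; exact h2)
        have key : s^2 - (p:ℤ)*t^2 = -2 := by linear_combination -hs + (p:ℤ)*ht + hc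
        have h8 : ((s:ZMod 4))^2 - ((p:ℕ):ZMod 4) * (t:ZMod 4)^2 = -2 := by
          have := congrArg (Int.cast : ℤ → ZMod 4) key
          push_cast at this
          exact_mod_cast this
        rw [hp41, one_mul] at h8
        revert h8
        have : ∀ x y : ZMod 4, x^2 - y^2 ≠ -2 := by decide
        exact this _ _
  · -- both odd
    obtain ⟨k, hk⟩ := hao
    have hbo : b % 2 = 1 := by omega
    have ha3 : 3 ≤ a := by nlinarith
    have hcop : IsCoprime (a-2) (a+2) := copOdd _ _ (by omega) (Or.inr (by ring))
    have hfac : (a-2) * (a+2) = (p:ℤ) * b ^ 2 := by linear_combination h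
    have hdvd : (p:ℤ) ∣ (a-2) * (a+2) := hfac ▸ dvd_mul_right _ _
    rcases hpZ.dvd_mul.mp hdvd with hcase | hcase
    · -- p ∣ a-2 : s^2 = a+2, pt^2 = a-2
      obtain ⟨c, hc⟩ := hcase
      have hc1 : 1 ≤ c := by nlinarith
      have h2 : (a+2) * c = b ^ 2 := by
        apply mul_left_cancel₀ hp0
        rw [← hfac, hc]; ring
      have hcop2 : IsCoprime (a+2) c := hcop.symm.of_isCoprime_of_dvd_right ⟨(p:ℤ), by rw [hc]; ring⟩
      obtain ⟨s, hs0, hs⟩ := sqOf (by linarith : (0:ℤ) < a+2) hcop2 h2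
      obtain ⟨t, ht0, ht⟩ := sqOf (by linarith : (0:ℤ) < c) hcop2.symm
        (by rw [mul_comm] at h2; exact h2)
      have hst : s * t = b := by
        apply sqEq (by positivity) (by linarith)
        rw [mul_pow, ← hs, ← ht, h2]
      exact ⟨s, t, hs0, ht0, by linear_combination -hs - (p:ℤ)*ht - hc, hst,
        Or.inl (by linear_combination -hs + (p:ℤ)*ht + hc)⟩
    · -- p ∣ a+2 : s^2 = a-2, pt^2 = a+2
      obtain ⟨c, hc⟩ := hcase
      have hc1 : 1 ≤ c := by nlinarith
      have h2 : (a-2) * c = b ^ 2 := by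
        apply mul_left_cancel₀ hp0
        rw [← hfac, hc]; ring
      have hcop2 : IsCoprime (a-2) c := hcop.of_isCoprime_of_dvd_right ⟨(p:ℤ), by rw [hc]; ring⟩
      obtain ⟨s, hs0, hs⟩ := sqOf (by linarith : (0:ℤ) < a-2) hcop2 h2
      obtain ⟨t, ht0, ht⟩ := sqOf (by linarith : (0:ℤ) < c) hcop2.symm
        (by rw [mul_comm] at h2; exact h2)
      have hst : s * t = b := by
        apply sqEq (by positivity) (by linarith)
        rw [mul_pow, ← hs, ← ht, h2]
      exact ⟨s, t, hs0, ht0, by linear_combination -hs - (p:ℤ)*ht - hc, hst,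
        Or.inr (by linear_combination -hs + (p:ℤ)*ht + hc)⟩


private lemma prod4 : ∀ v : ℕ, 0 < v → (∀ q : ℕ, q.Prime → q ∣ v → q % 4 = 1) → v % 4 = 1 := by
  intro v
  induction v using Nat.strong_induction_on with
  | _ v ih =>
    intro hv h
    rcases eq_or_lt_of_le (Nat.succ_le_of_lt hv) with h1 | h1
    · omega
    · have hne : v ≠ 1 := by omega
      set q := v.minFac with hq
      have hqp : q.Prime := Nat.minFac_prime hne
      have hqd : q ∣ v := Nat.minFac_dvd v
      have hq4 : q % 4 = 1 := h q hqp hqd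
      obtain ⟨m, hm⟩ := hqd
      have hm0 : 0 < m := by
        rcases Nat.eq_zero_or_pos m with h0 | h0
        · subst h0; omega
        · exact h0
      have hmlt : m < v := by
        have : 2 ≤ q := hqp.two_le
        nlinarith
      have hm4 : m % 4 = 1 := ih m hmlt hm0 (fun r hr hrd => h r hr (hm ▸ Dvd.dvd.mul_left hrd q))
      rw [hm, Nat.mul_mod, hq4, hm4]

private lemma finCong (p : ℕ) (hp : p.Prime) (hp4 : p % 4 = 1) (U V : ℕ)
    (h : p * V ^ 2 = U ^ 2 + 1) : U % 2 = 0 ∧ V % 4 = 1 := by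
  have hz4 : ((p : ZMod 4) * (V:ZMod 4)^2 = (U:ZMod 4)^2 + 1) := by exact_mod_cast congrArg (Nat.cast : ℕ → ZMod 4) h
  have hp41 : (p : ZMod 4) = 1 := by rw [← ZMod.natCast_mod, hp4]; rfl
  rw [hp41, one_mul] at hz4
  -- V odd
  have hVodd : V % 2 = 1 := by
    rcases Nat.even_or_odd V with ⟨k, hk⟩ | ho
    · exfalso
      subst hk
      have : ((k:ZMod 4) + k)^2 = (U:ZMod 4)^2 + 1 := by exact_mod_cast hz4
      revert this
      have : ∀ x y : ZMod 4, (x + x)^2 ≠ y^2 + 1 := by decide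
      exact this k U
    · exact Nat.odd_iff.mp ho
  -- U even
  have hUe : U % 2 = 0 := by
    rcases Nat.even_or_odd U with he | ⟨k, hk⟩
    · exact Nat.even_iff.mp he
    · exfalso
      obtain ⟨m, hmv⟩ : Odd V := Nat.odd_iff.mpr hVodd
      subst hk hmv
      have : ((2*(m:ZMod 4)+1))^2 = ((2*(k:ZMod 4))+1)^2 + 1 := by
        push_cast at hz4 ⊢; linear_combination hz4
      revert this
      have : ∀ x y : ZMod 4, (2*x+1)^2 ≠ (2*y+1)^2 + 1 := by decide
      exact this m k
  refine ⟨hUe, ?_⟩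
  have hV0 : 0 < V := by
    rcases Nat.eq_zero_or_pos V with h0 | h0
    · exfalso; subst h0; simp at h
    · exact h0
  refine prod4 V hV0 (fun q hq hqd => ?_)
  haveI : Fact q.Prime := ⟨hq⟩
  have hq2 : q ≠ 2 := by
    rintro rfl
    omega
  have hqU : (U : ZMod q)^2 = -1 := by
    have hd : (V : ZMod q) = 0 := (ZMod.natCast_eq_zero_iff _ _).mpr hqd
    have := congrArg (Nat.cast : ℕ → ZMod q) h
    push_cast at this
    rw [hd] at this
    linear_combination -this
  have h3 : q % 4 ≠ 3 := ZMod.exists_sq_eq_neg_one_iff.mp ⟨U, by rw [← hqU]; ring⟩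
  have : q % 2 = 1 := Nat.odd_iff.mp (hq.odd_of_ne_two hq2)
  omega

set_option maxHeartbeats 1000000 in
/-- For a prime `p ≡ 1 (mod 4)`, `ε_p^λ = u + v√p` with `u` even and
`v ≡ 1 (mod 4)`. -/
theorem stmt11 (p : ℕ) (hp : p.Prime) (hp4 : p % 4 = 1)
    (ε : ℝ) (hε : IsFundamentalUnit p ε)
    (lam : ℕ) (hlam : (p % 8 = 1 → lam = 1) ∧ (p % 8 = 5 → lam = 3)) :
    ∃ u v : ℕ, ε ^ lam = u + v * Real.sqrt p ∧ u % 2 = 0 ∧ v % 4 = 1 := by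
  obtain ⟨⟨a, b, h2ε, hnorm⟩, hε1, hmin⟩ := hε
  have hp5 : 5 ≤ p := by have := hp.two_le; omega
  have hp5' : (5:ℤ) ≤ (p:ℤ) := by exact_mod_cast hp5
  have hp5R : (5:ℝ) ≤ (p:ℝ) := by exact_mod_cast hp5
  set sp := Real.sqrt (p:ℝ) with hspdef
  have hsp : sp ^ 2 = (p:ℝ) := Real.sq_sqrt (by positivity)
  have hsp0 : 0 < sp := Real.sqrt_pos.mpr (by positivity)
  have h2ε' : 2 * ε = (a:ℝ) + (b:ℝ) * sp := by
    rw [h2ε]; norm_num [hspdef]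
  clear h2ε
  -- signs of a and b
  have habs : ((a:ℝ) + b*sp) * ((a:ℝ) - b*sp) = ((a:ℝ)^2 - (p:ℝ)*(b:ℝ)^2) := by
    linear_combination (-(b:ℝ)^2) * hsp
  have hX : -2 < (a:ℝ) - b*sp ∧ (a:ℝ) - b*sp < 2 := by
    rcases hnorm with hn | hn
    · have hnR : (a:ℝ)^2 - (p:ℝ)*(b:ℝ)^2 = 4 := by exact_mod_cast hn
      rw [hnR] at habs
      rw [← h2ε'] at habs
      constructor <;> nlinarith
    · have hnR : (a:ℝ)^2 - (p:ℝ)*(b:ℝ)^2 = -4 := by exact_mod_cast hn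
      rw [hnR] at habs
      rw [← h2ε'] at habs
      constructor <;> nlinarith
  have ha1 : 1 ≤ a := by
    have : (0:ℝ) < a := by nlinarith [hX.1, hX.2, hε1, h2ε']
    exact_mod_cast this
  have hb1 : 1 ≤ b := by
    have hbsp : (0:ℝ) < (b:ℝ) * sp := by nlinarith [hX.1, hX.2, hε1, h2ε']
    have : (0:ℝ) < (b:ℝ) := by
      by_contra hcon
      push_neg at hcon
      nlinarith
    exact_mod_cast this
  -- the fundamental unit has norm -1 (i.e. -4 here)
  have hnn : a ^ 2 - (p:ℤ) * b ^ 2 = -4 := by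
    rcases hnorm with hn | hn
    · exfalso
      obtain ⟨s, t, hs0, ht0, hsum2, hstb, hor⟩ := descent p hp hp4 a b ha1 hb1 hn
      have hs0R : (0:ℝ) ≤ (s:ℝ) := by exact_mod_cast hs0
      have ht0R : (0:ℝ) ≤ (t:ℝ) := by exact_mod_cast ht0
      have hsum2R : (s:ℝ)^2 + (p:ℝ)*(t:ℝ)^2 = 2*(a:ℝ) := by exact_mod_cast hsum2
      have hstbR : (s:ℝ)*(t:ℝ) = (b:ℝ) := by exact_mod_cast hstb
      set η : ℝ := ((s:ℝ) + t*sp)/2 with hηdef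
      have hη0 : 0 ≤ η := by positivity
      have hη2 : η ^ 2 = ε := by
        rw [hηdef]
        linear_combination (1/4)*hsum2R + (sp/2)*hstbR + ((t:ℝ)^2/4)*hsp - (1/2)*h2ε'
      have hη1 : 1 < η := by nlinarith
      have hηq : IsQuadUnit p η := by
        refine ⟨s, t, ?_, hor⟩
        rw [hηdef]
        push_cast
        ring
      have hle : ε ≤ η := hmin η hηq hη1
      nlinarith
    · exact hn
  have hnnR : (a:ℝ)^2 - (p:ℝ)*(b:ℝ)^2 = -4 := by exact_mod_cast hnn
  -- parity of a and b agree
  have hp21 : ((p:ℕ) : ZMod 2) = 1 := by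
    rw [← ZMod.natCast_mod]
    have : p % 2 = 1 := by omega
    rw [this]; rfl
  have hpar : a % 2 = b % 2 := by
    have h2 : ((a:ZMod 2))^2 - ((p:ℕ):ZMod 2) * (b:ZMod 2)^2 = 0 := by
      have := congrArg (Int.cast : ℤ → ZMod 2) hnn
      push_cast at this
      rw [this]; decide
    rw [hp21, one_mul] at h2
    have heq : (a : ZMod 2) = (b : ZMod 2) := by
      revert h2
      have : ∀ x y : ZMod 2, x^2 - y^2 = 0 → x = y := by decide
      exact this _ _
    have hd : ((2:ℕ):ℤ) ∣ a - b := by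
      rw [← ZMod.intCast_zmod_eq_zero_iff_dvd]
      push_cast
      rw [sub_eq_zero]
      exact heq
    have hd' : (2:ℤ) ∣ a - b := by exact_mod_cast hd
    omega
  have h8 : p % 8 = 1 ∨ p % 8 = 5 := by omega
  rcases h8 with h81 | h85
  · -- p ≡ 1 mod 8, lam = 1
    have hlam1 : lam = 1 := hlam.1 h81
    -- a and b are both even
    have hae : a % 2 = 0 := by
      by_contra hcon
      have hao : a % 2 = 1 := by omega
      have hbo : b % 2 = 1 := by omega
      obtain ⟨k, hk⟩ : ∃ k, a = 2*k+1 := ⟨a/2, by omega⟩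
      obtain ⟨l, hl⟩ : ∃ l, b = 2*l+1 := ⟨b/2, by omega⟩
      have hp81 : ((p:ℕ) : ZMod 8) = 1 := by
        rw [← ZMod.natCast_mod, h81]; rfl
      have h2 : (2*(k:ZMod 8)+1)^2 - ((p:ℕ):ZMod 8) * (2*(l:ZMod 8)+1)^2 = -4 := by
        have := congrArg (Int.cast : ℤ → ZMod 8) hnn
        rw [hk, hl] at this
        push_cast at this ⊢
        linear_combination this
      rw [hp81, one_mul] at h2
      revert h2
      have : ∀ k l : ZMod 8, (2*k+1)^2 - (2*l+1)^2 ≠ -4 := by decide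
      exact this _ _
    obtain ⟨u, hu⟩ : ∃ u, a = 2*u := ⟨a/2, by omega⟩
    obtain ⟨v, hv⟩ : ∃ v, b = 2*v := ⟨b/2, by omega⟩
    have huv : u^2 - (p:ℤ)*v^2 = -1 := by
      have h4 : 4*(u^2 - (p:ℤ)*v^2) = 4*(-1) := by
        rw [hu, hv] at hnn; linear_combination hnn
      linarith
    have hu1 : 1 ≤ u := by omega
    have hv1 : 1 ≤ v := by omega
    have hεuv : ε = (u:ℝ) + (v:ℝ) * sp := by
      rw [hu, hv] at h2ε'
      push_cast at h2ε'
      linarith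
    -- transfer to ℕ
    set U := u.toNat with hUdef
    set V := v.toNat with hVdef
    have hU : (U:ℤ) = u := Int.toNat_of_nonneg (by omega)
    have hV : (V:ℤ) = v := Int.toNat_of_nonneg (by omega)
    have hUV : p * V ^ 2 = U ^ 2 + 1 := by
      zify
      rw [hU, hV]
      linarith
    obtain ⟨hU2, hV4⟩ := finCong p hp hp4 U V hUV
    refine ⟨U, V, ?_, hU2, hV4⟩
    rw [hlam1, pow_one, hεuv]
    have hUR : ((U:ℕ):ℝ) = ((u:ℤ):ℝ) := by exact_mod_cast congrArg (Int.cast : ℤ → ℝ) hU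
    have hVR : ((V:ℕ):ℝ) = ((v:ℤ):ℝ) := by exact_mod_cast congrArg (Int.cast : ℤ → ℝ) hV
    rw [hUR, hVR]
  · -- p ≡ 5 mod 8, lam = 3
    have hlam3 : lam = 3 := hlam.2 h85
    have hpodd : Odd (p:ℤ) := by
      rw [Int.odd_iff]
      omega
    have heu : Even (a * ((p:ℤ)*b^2 - 1)) := by
      rcases Int.even_or_odd a with hae | hao
      · exact hae.mul_right _
      · have hbo : Odd b := by
          rw [Int.odd_iff]
          rw [Int.odd_iff] at hao
          omega
        have : Odd ((p:ℤ)*b^2) := hpodd.mul (hbo.pow)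
        exact ((this.sub_odd odd_one)).mul_left _
    have hev : Even (b * ((p:ℤ)*b^2 - 3)) := by
      rcases Int.even_or_odd b with hbe | hbo
      · exact hbe.mul_right _
      · have : Odd ((p:ℤ)*b^2) := hpodd.mul (hbo.pow)
        have h3 : Odd (3:ℤ) := by decide
        exact ((this.sub_odd h3)).mul_left _
    obtain ⟨u, hu⟩ : ∃ u, a * ((p:ℤ)*b^2 - 1) = 2*u := by
      obtain ⟨k, hk⟩ := heu; exact ⟨k, by rw [hk]; ring⟩
    obtain ⟨v, hv⟩ : ∃ v, b * ((p:ℤ)*b^2 - 3) = 2*v := by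
      obtain ⟨k, hk⟩ := hev; exact ⟨k, by rw [hk]; ring⟩
    have hu2 : (a*((p:ℤ)*b^2-1))^2 = 4*u^2 := by rw [hu]; ring
    have hv2 : (b*((p:ℤ)*b^2-3))^2 = 4*v^2 := by rw [hv]; ring
    have huv : u^2 - (p:ℤ)*v^2 = -1 := by
      have h4 : 4*(u^2 - (p:ℤ)*v^2) = -4 := by
        linear_combination (-1:ℤ)*hu2 + (p:ℤ)*hv2 + ((p:ℤ)*b^2-1)^2*hnn
      linarith
    -- positivity of u, v
    have hb2 : (1:ℤ) ≤ b^2 := by nlinarith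
    have hpb : (5:ℤ) ≤ (p:ℤ)*b^2 := by nlinarith
    have hu0 : (0:ℤ) ≤ u := by
      have key : a*((p:ℤ)*b^2-1) = (a-1)*((p:ℤ)*b^2-1) + ((p:ℤ)*b^2-1) := by ring
      have h1 : (0:ℤ) ≤ (a-1)*((p:ℤ)*b^2-1) :=
        mul_nonneg (by linarith) (by linarith)
      linarith [hu]
    have hv0 : (0:ℤ) ≤ v := by
      have key : b*((p:ℤ)*b^2-3) = (b-1)*((p:ℤ)*b^2-3) + ((p:ℤ)*b^2-3) := by ring
      have h1 : (0:ℤ) ≤ (b-1)*((p:ℤ)*b^2-3) :=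
        mul_nonneg (by linarith) (by linarith)
      linarith [hv]
    -- the real equation
    have huR : (a:ℝ)*((p:ℝ)*(b:ℝ)^2-1) = 2*(u:ℝ) := by exact_mod_cast hu
    have hvR : (b:ℝ)*((p:ℝ)*(b:ℝ)^2-3) = 2*(v:ℝ) := by exact_mod_cast hv
    have e1 : 8*ε^3 = ((a:ℝ)+(b:ℝ)*sp)^3 := by rw [← h2ε']; ring
    have e2 : ((a:ℝ)+(b:ℝ)*sp)^3 =
        ((a:ℝ)^3 + 3*(a:ℝ)*(b:ℝ)^2*(p:ℝ)) + (3*(a:ℝ)^2*(b:ℝ) + (b:ℝ)^3*(p:ℝ))*sp := by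
      linear_combination (3*(a:ℝ)*(b:ℝ)^2 + (b:ℝ)^3*sp) * hsp
    have e3 : (a:ℝ)^3 + 3*(a:ℝ)*(b:ℝ)^2*(p:ℝ) = 8*(u:ℝ) := by
      linear_combination 4*huR + (a:ℝ)*hnnR
    have e4 : 3*(a:ℝ)^2*(b:ℝ) + (b:ℝ)^3*(p:ℝ) = 8*(v:ℝ) := by
      linear_combination 4*hvR + 3*(b:ℝ)*hnnR
    have hε3 : ε^3 = (u:ℝ) + (v:ℝ)*sp := by
      linear_combination (1/8)*e1 + (1/8)*e2 + (1/8)*e3 + (sp/8)*e4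
    -- transfer to ℕ
    set U := u.toNat with hUdef
    set V := v.toNat with hVdef
    have hU : (U:ℤ) = u := Int.toNat_of_nonneg hu0
    have hV : (V:ℤ) = v := Int.toNat_of_nonneg hv0
    have hUV : p * V ^ 2 = U ^ 2 + 1 := by
      zify
      rw [hU, hV]
      linarith
    obtain ⟨hU2, hV4⟩ := finCong p hp hp4 U V hUV
    refine ⟨U, V, ?_, hU2, hV4⟩
    rw [hlam3, hε3]
    have hUR : ((U:ℕ):ℝ) = ((u:ℤ):ℝ) := by exact_mod_cast congrArg (Int.cast : ℤ → ℝ) hU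
    have hVR : ((V:ℕ):ℝ) = ((v:ℤ):ℝ) := by exact_mod_cast congrArg (Int.cast : ℤ → ℝ) hV
    rw [hUR, hVR]

end
end

section
/- Let p ≡ 1 (mod 4) be prime and q ≡ 1 (mod 4) a prime with (p/q) = 1, let h be the class number of ℚ(√p) and λ = 1 if p ≡ 1 (mod 8), λ = 3 if p ≡ 5 (mod 8), and let x, y be natural numbers with x² − p y² = q^{λh}, x odd and y even. Then α = x + y√p satisfies α ≡ ±1 (mod 4) in the ring of integers of ℚ(√p); in particular α* = (−1)^((x+y−1)/2) α satisfies α* ≡ 1 (mod 4). -/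
open NumberField IntermediateField

noncomputable section

lemma sqrt_sq (p : ℕ) : (((Real.sqrt p : ℝ) : ℂ)) ^ 2 = (p : ℂ) := by
  rw [← Complex.ofReal_pow, Real.sq_sqrt (by positivity)]
  norm_cast

open Polynomial in
lemma aux1 (p : ℕ) (u v c : ℤ) (hc : u ^ 2 - (p : ℤ) * v ^ 2 = 4 * c) :
    ((u : ℂ) + (v : ℂ) * ((Real.sqrt p : ℝ) : ℂ)) / 2 ∈ QF ((p:ℕ) : ℂ) ∧
    IsIntegral ℤ (((u : ℂ) + (v : ℂ) * ((Real.sqrt p : ℝ) : ℂ)) / 2) := by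
  have hs := sqrt_sq p
  constructor
  · have hmem : ((Real.sqrt p : ℝ) : ℂ) ∈ QF ((p:ℕ) : ℂ) :=
      IntermediateField.subset_adjoin ℚ _ hs
    exact div_mem (add_mem (intCast_mem _ u) (mul_mem (intCast_mem _ v) hmem))
      (by have := intCast_mem (QF ((p:ℕ):ℂ)) 2; norm_num at this ⊢)
  · refine ⟨X ^ 2 - C u * X + C c, ?_, ?_⟩
    · monicity!
    · simp only [eval₂_add, eval₂_sub, eval₂_mul, eval₂_pow, eval₂_X, eval₂_C, algebraMap_int_eq, Int.coe_castRingHom]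
      have h4 : (u:ℂ)^2 - (p:ℂ)*(v:ℂ)^2 = 4*(c:ℂ) := by exact_mod_cast hc
      linear_combination ((v:ℂ)^2/4) * hs - (1/4 : ℂ) * h4

lemma aux2 (p : ℕ) (hp4 : p % 4 = 1) (x y : ℕ) (ε : ℤ)
    (hε4 : ((x:ℤ) - (y:ℤ) - ε) % 4 = 0) (hy : (y:ℤ) % 2 = 0) :
    ∃ γ : ℂ, γ ∈ QF ((p:ℕ) : ℂ) ∧ IsIntegral ℤ γ ∧
      ((x:ℂ) + (y:ℂ) * ((Real.sqrt p : ℝ) : ℂ)) - (ε:ℂ) = 4 * γ := by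
  obtain ⟨u, hu⟩ : ∃ u : ℤ, (x:ℤ) - ε = 2 * u := ⟨((x:ℤ) - ε) / 2, by omega⟩
  obtain ⟨v, hv⟩ : ∃ v : ℤ, (y:ℤ) = 2 * v := ⟨(y:ℤ) / 2, by omega⟩
  obtain ⟨a, ha⟩ : ∃ a : ℤ, u = v + 2 * a := ⟨(u - v) / 2, by omega⟩
  obtain ⟨m, hm⟩ : ∃ m : ℕ, p = 4 * m + 1 := ⟨p / 4, by omega⟩
  have hpz : (p:ℤ) = 4 * (m:ℤ) + 1 := by exact_mod_cast congrArg (Nat.cast : ℕ → ℤ) hm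
  have hc : u ^ 2 - (p:ℤ) * v ^ 2 = 4 * (a ^ 2 + a * v - (m:ℤ) * v ^ 2) := by
    rw [ha, hpz]; ring
  obtain ⟨hmem, hint⟩ := aux1 p u v _ hc
  refine ⟨_, hmem, hint, ?_⟩
  have h1 : ((x:ℤ) - ε : ℤ) = ((2 * u : ℤ) : ℤ) := hu
  have h1c : (x:ℂ) - (ε:ℂ) = 2 * (u:ℂ) := by exact_mod_cast congrArg (Int.cast : ℤ → ℂ) hu
  have h2c : (y:ℂ) = 2 * (v:ℂ) := by exact_mod_cast congrArg (Int.cast : ℤ → ℂ) hv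
  linear_combination h1c + ((Real.sqrt p : ℝ) : ℂ) * h2c

/-- With `x² - p y² = q^{λh}`, `x` odd, `y` even, the element
`α = x + y√p` is `≡ ±1 (mod 4)` in the ring of integers of `ℚ(√p)`, and
`α* = (-1)^((x+y-1)/2) α` is `≡ 1 (mod 4)`. -/
theorem stmt19 (p q : ℕ) (hp : p.Prime) (hq : q.Prime) (hpq : p ≠ q)
    (hp4 : p % 4 = 1) (hq4 : q % 4 = 1)
    (hleg : haveI : Fact q.Prime := ⟨hq⟩; legendreSym q p = 1)
    (h : ℕ) (hh : h = Nat.card (ClassGroup (𝓞 (QF ((p : ℕ) : ℂ)))))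
    (lam : ℕ) (hlam : (p % 8 = 1 → lam = 1) ∧ (p % 8 = 5 → lam = 3))
    (x y : ℕ) (hx : x % 2 = 1) (hy : y % 2 = 0)
    (hxy : (x : ℤ) ^ 2 - (p : ℤ) * (y : ℤ) ^ 2 = (q : ℤ) ^ (lam * h)) :
    (∃ γ : ℂ, γ ∈ QF ((p : ℕ) : ℂ) ∧ IsIntegral ℤ γ ∧
      (((((x : ℝ) + (y : ℝ) * Real.sqrt p) : ℝ) : ℂ) - 1 = 4 * γ ∨
       ((((x : ℝ) + (y : ℝ) * Real.sqrt p) : ℝ) : ℂ) + 1 = 4 * γ)) ∧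
    (∃ γ : ℂ, γ ∈ QF ((p : ℕ) : ℂ) ∧ IsIntegral ℤ γ ∧
      ((((-1 : ℝ) ^ ((x + y - 1) / 2) * ((x : ℝ) + (y : ℝ) * Real.sqrt p) : ℝ) : ℂ) - 1
        = 4 * γ)) := by
  have hxI : (x:ℤ) % 2 = 1 := by omega
  have hyI : (y:ℤ) % 2 = 0 := by omega
  by_cases h1 : ((x:ℤ) - (y:ℤ) - 1) % 4 = 0
  · obtain ⟨γ, hγm, hγi, hγe⟩ := aux2 p hp4 x y 1 h1 hyI
    push_cast at hγe
    have hev : ((-1:ℂ)) ^ ((x + y - 1) / 2) = 1 :=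
      Even.neg_one_pow ⟨(x + y - 1) / 4, by omega⟩
    refine ⟨⟨γ, hγm, hγi, Or.inl ?_⟩, ⟨γ, hγm, hγi, ?_⟩⟩
    · push_cast
      linear_combination hγe
    · push_cast
      rw [hev]
      linear_combination hγe
  · obtain ⟨γ, hγm, hγi, hγe⟩ := aux2 p hp4 x y (-1) (by omega) hyI
    push_cast at hγe
    have hod : ((-1:ℂ)) ^ ((x + y - 1) / 2) = -1 :=
      Odd.neg_one_pow ⟨((x + y - 1) / 2 - 1) / 2, by omega⟩
    refine ⟨⟨γ, hγm, hγi, Or.inr ?_⟩, ⟨-γ, neg_mem hγm, hγi.neg, ?_⟩⟩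
    · push_cast
      linear_combination hγe
    · push_cast
      rw [hod]
      linear_combination -hγe

end
end
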